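/- Let α be a finite type and p, q probability mass functions on α with p(x)+q(x) > 0 for all x. If D*(x) = p(x)/(p(x)+q(x)), then ∑ x, p(x)*log(D*(x)) + q(x)*log(1 - D*(x)) ≥ -log 4, with equality if and only if p = q. -/

import Mathlib

open Real Finset

private lemma klpt {a b : ℝ} (ha : 0 ≤ a) (hb : 0 < b) :
    a - b ≤ a * Real.log (a / b) ∧ (a * Real.log (a / b) = a - b ↔ a = b) := by
  rcases eq_or_lt_of_le ha with h0 | h0
  · constructor
    · simp [← h0]; linarith
    · simp [← h0]
      constructor
      · intro h; linarith
      · intro h; exact absurd h.symm (ne_of_gt hb)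
  · have hba : 0 < b / a := div_pos hb h0
    have hle : Real.log (b / a) ≤ b / a - 1 := Real.log_le_sub_one_of_pos hba
    have hlog : Real.log (a / b) = -Real.log (b / a) := by
      rw [← Real.log_inv]; congr 1; field_simp
    constructor
    · rw [hlog]
      have : a * -Real.log (b / a) ≥ a * -(b / a - 1) := by
        apply mul_le_mul_of_nonneg_left (by linarith) (le_of_lt h0)
      have h2 : a * -(b / a - 1) = a - b := by field_simp; ring
      linarith
    · constructor
      · intro heq
        by_contra hne
        have hba1 : b / a ≠ 1 := by
          intro h; apply hne; field_simp at h; linarith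
        have hstrict : Real.log (b / a) < b / a - 1 :=
          Real.log_lt_sub_one_of_pos hba hba1
        have : a * -Real.log (b / a) > a * -(b / a - 1) := by
          apply mul_lt_mul_of_pos_left (by linarith) h0
        have h2 : a * -(b / a - 1) = a - b := by field_simp; ring
        rw [hlog] at heq; linarith
      · intro h; subst h; simp [div_self (ne_of_gt h0)]

theorem stmt_11 {α : Type*} [Fintype α] (p q : α → ℝ)
    (hp : ∀ x, 0 ≤ p x) (hq : ∀ x, 0 ≤ q x)
    (hps : ∑ x, p x = 1) (hqs : ∑ x, q x = 1)
    (hpq : ∀ x, 0 < p x + q x) :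
    -Real.log 4 ≤
      ∑ x, (p x * Real.log (p x / (p x + q x)) +
            q x * Real.log (1 - p x / (p x + q x))) ∧
    (∑ x, (p x * Real.log (p x / (p x + q x)) +
           q x * Real.log (1 - p x / (p x + q x))) = -Real.log 4 ↔ p = q) := by
  set m : α → ℝ := fun x => (p x + q x) / 2 with hm
  have hmpos : ∀ x, 0 < m x := fun x => by have := hpq x; simp [hm]; linarith
  set F : α → ℝ := fun x => p x * Real.log (p x / m x) + q x * Real.log (q x / m x)
    with hF
  -- pointwise rewrite of the terms
  have hterm : ∀ x, p x * Real.log (p x / (p x + q x)) +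
      q x * Real.log (1 - p x / (p x + q x)) = F x - (p x + q x) * Real.log 2 := by
    intro x
    have hs : p x + q x ≠ 0 := ne_of_gt (hpq x)
    have h1 : 1 - p x / (p x + q x) = q x / (p x + q x) := by field_simp; ring
    have hpart : ∀ a : ℝ, 0 ≤ a → a * Real.log (a / (p x + q x)) =
        a * Real.log (a / m x) - a * Real.log 2 := by
      intro a ha
      rcases eq_or_lt_of_le ha with h0 | h0
      · simp [← h0]
      · have hm0 : m x ≠ 0 := ne_of_gt (hmpos x)
        have : a / (p x + q x) = (a / m x) / 2 := by
          simp only [hm]; field_simp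
        rw [this, Real.log_div (by positivity) two_ne_zero]
        ring
    rw [h1, hpart (p x) (hp x), hpart (q x) (hq x), hF]
    ring
  have hsum : ∑ x, (p x * Real.log (p x / (p x + q x)) +
      q x * Real.log (1 - p x / (p x + q x))) = (∑ x, F x) - Real.log 4 := by
    rw [Finset.sum_congr rfl (fun x _ => hterm x), Finset.sum_sub_distrib,
      ← Finset.sum_mul]
    have h2 : (∑ i, (p i + q i)) = 2 := by
      rw [Finset.sum_add_distrib, hps, hqs]; norm_num
    have h4 : Real.log 4 = 2 * Real.log 2 := by
      rw [show (4:ℝ) = 2^2 by norm_num, Real.log_pow]; push_cast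
      try ring
    rw [h2, h4]
  -- pointwise nonnegativity of F with equality characterization
  have hFx : ∀ x, 0 ≤ F x ∧ (F x = 0 ↔ p x = q x) := by
    intro x
    obtain ⟨hA, hAeq⟩ := klpt (hp x) (hmpos x)
    obtain ⟨hB, hBeq⟩ := klpt (hq x) (hmpos x)
    have hsum0 : (p x - m x) + (q x - m x) = 0 := by simp [hm]; ring
    constructor
    · have := add_le_add hA hB; rw [hsum0] at this; exact this
    · constructor
      · intro h0
        simp only [hF] at h0
        have hAe : p x * Real.log (p x / m x) = p x - m x := by linarith
        have hpm := hAeq.mp hAe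
        simp only [hm] at hpm; linarith
      · intro h
        have hmx : m x = q x := by simp only [hm, h]; ring
        simp only [hF, hmx, h]
        rcases eq_or_lt_of_le (hq x) with h0 | h0
        · simp [← h0]
        · simp [div_self (ne_of_gt h0)]
  have hFsum : 0 ≤ ∑ x, F x := Finset.sum_nonneg (fun x _ => (hFx x).1)
  constructor
  · rw [hsum]; linarith
  · rw [hsum]
    constructor
    · intro h
      have h0 : ∑ x, F x = 0 := by linarith
      have := (Finset.sum_eq_zero_iff_of_nonneg (fun x _ => (hFx x).1)).mp h0
      funext x
      exact (hFx x).2.mp (this x (Finset.mem_univ x))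
    · intro h
      have : ∑ x, F x = 0 := Finset.sum_eq_zero (fun x _ => (hFx x).2.mpr (congrFun h x))
      rw [this]; ring
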